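/- With ρ_{k,r} as above: for each pair of integers (k,r) with k ≥ 0 and r odd, the polynomials ρ_{k,r}, ρ_{k,r+2}, …, ρ_{k,r+2⌊k/2⌋} ∈ ℂ[ω,β] are linearly independent over ℂ. -/

import Mathlib

open PowerSeries

noncomputable abbrev Stmt8.Pω : PowerSeries (MvPolynomial (Fin 2) ℂ) :=
  PowerSeries.C (MvPolynomial.X 0)

noncomputable abbrev Stmt8.Pβ : PowerSeries (MvPolynomial (Fin 2) ℂ) :=
  PowerSeries.C (MvPolynomial.X 1)

noncomputable section
namespace Stmt8Aux

abbrev Rc : Type := MvPolynomial (Fin 2) ℂ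

lemma natCast_ne' (n : ℕ) : ((n : Rc) + 1) ≠ 0 := by
  have : ((n+1 : ℕ) : Rc) ≠ 0 := Nat.cast_ne_zero.mpr (Nat.succ_ne_zero n)
  simpa using this

lemma coeff_derivativeFun' (f : PowerSeries Rc) (n : ℕ) :
    coeff n f.derivativeFun = coeff (n+1) f * (n+1) := coeff_derivative f n

lemma ps_ne_zero {f : PowerSeries Rc} (hf : constantCoeff f ≠ 0) : f ≠ 0 := by
  intro h; apply hf; rw [h, map_zero]

/-- ODE uniqueness -/
lemma ode_zero (u F : PowerSeries Rc) (hu : constantCoeff u ≠ 0) (c : Rc)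
    (hF0 : constantCoeff F = 0)
    (hode : u * F.derivativeFun = PowerSeries.C (R := Rc) c * (X * F)) : F = 0 := by
  refine PowerSeries.ext fun n => ?_
  rw [map_zero]
  induction n using Nat.strong_induction_on with
  | _ n ih =>
    match n with
    | 0 => simpa using hF0
    | (m+1) =>
      have hl := congrArg (coeff m) hode
      rw [coeff_mul] at hl
      rw [Finset.sum_eq_single_of_mem (0, m) (Finset.HasAntidiagonal.mem_antidiagonal.mpr (zero_add m))] at hl
      · have hr : (coeff m) (PowerSeries.C (R := Rc) c * (X * F)) = 0 := by
          rcases Nat.eq_zero_or_eq_succ_pred m with hm | hm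
          · subst hm; simp
          · rw [hm, coeff_C_mul, coeff_succ_X_mul, ih m.pred (by omega), mul_zero]
        rw [hr, coeff_derivativeFun'] at hl
        have : constantCoeff u * ((coeff (m+1)) F * ((m:Rc)+1)) = 0 := by
          rw [← hl]; push_cast; ring_nf; rw [coeff_zero_eq_constantCoeff]; ring
        rcases mul_eq_zero.mp this with h1 | h2
        · exact absurd h1 hu
        · rcases mul_eq_zero.mp h2 with h3 | h4
          · exact h3
          · exact absurd h4 (natCast_ne' m)
      · rintro ⟨a, b⟩ hab hne
        have hb : b < m := by
          rcases Nat.lt_or_ge b m with h | h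
          · exact h
          · exfalso
            have := Finset.HasAntidiagonal.mem_antidiagonal.mp hab
            have : a = 0 ∧ b = m := by omega
            exact hne (by simp [Prod.ext_iff, this.1, this.2])
        rw [coeff_derivativeFun', ih (b+1) (by omega)]
        simp

lemma eq_C_of_der_zero (f : PowerSeries Rc) (hf : f.derivativeFun = 0) :
    f = PowerSeries.C (R := Rc) (constantCoeff f) := by
  refine PowerSeries.ext fun n => ?_
  match n with
  | 0 => simp
  | (m+1) =>
    have := congrArg (coeff m) hf
    rw [coeff_derivativeFun', map_zero] at this
    rcases mul_eq_zero.mp this with h | h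
    · simp [h, coeff_C]
    · exact absurd h (natCast_ne' m)

lemma map_derivativeFun (φ : Rc →+* Rc) (f : PowerSeries Rc) :
    (f.map φ).derivativeFun = f.derivativeFun.map φ := by
  refine PowerSeries.ext fun n => ?_
  simp [coeff_derivativeFun', coeff_map, map_mul, map_natCast]

lemma der_sub (f g : PowerSeries Rc) :
    (f - g).derivativeFun = f.derivativeFun - g.derivativeFun := by
  refine PowerSeries.ext fun n => ?_
  simp [coeff_derivativeFun', map_sub, sub_mul]

lemma der_one_add (b : Rc) :
    (1 + PowerSeries.C (R := Rc) b * X^2 : PowerSeries Rc).derivativeFun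
      = PowerSeries.C (R := Rc) (2*b) * X := by
  refine PowerSeries.ext fun n => ?_
  rw [coeff_derivativeFun', map_add, coeff_C_mul, coeff_C_mul, coeff_X_pow, coeff_X, coeff_one]
  match n with
  | 0 => norm_num
  | 1 => norm_num [mul_comm]
  | (m+2) => simp

lemma C2R : (MvPolynomial.C (2:ℂ) : Rc) = 2 := map_ofNat _ 2
lemma C2P : (PowerSeries.C (R := Rc) (2:Rc)) = 2 := map_ofNat _ 2

lemma sqrt_one {f : PowerSeries Rc} (hf2 : f^2 = 1) (hf0 : constantCoeff f = 1) : f = 1 := by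
  have hm : (f - 1) * (f + 1) = 0 := by linear_combination hf2
  rcases mul_eq_zero.mp hm with hz | hz
  · linear_combination hz
  · exfalso
    apply ps_ne_zero (f := f + 1) ?_ hz
    rw [map_add, hf0, map_one]
    exact_mod_cast (two_ne_zero : (2:Rc) ≠ 0)

lemma sqrt_four {f : PowerSeries Rc} (hf2 : f^2 = 4) (hf0 : constantCoeff f = 2) : f = 2 := by
  have hm : (f - 2) * (f + 2) = 0 := by linear_combination hf2
  rcases mul_eq_zero.mp hm with hz | hz
  · linear_combination hz
  · exfalso
    apply ps_ne_zero (f := f + 2) ?_ hz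
    rw [map_add, hf0, show ((2:PowerSeries Rc)) = PowerSeries.C (R := Rc) 2 from (map_ofNat _ 2).symm,
      constantCoeff_C]
    norm_num

lemma expB {E : PowerSeries Rc} (hE0 : constantCoeff E = 1)
    (hE : E.derivativeFun = -(PowerSeries.C (R := Rc) (MvPolynomial.X 0)) * E) (n : ℕ) :
    coeff n E = MvPolynomial.C (((-1:ℂ)^n : ℂ) / n.factorial) * (MvPolynomial.X 0)^n := by
  induction n with
  | zero => simp [← coeff_zero_eq_constantCoeff] at hE0; simp [hE0]
  | succ n ih =>
    have hc := congrArg (coeff n) hE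
    rw [coeff_derivativeFun', neg_mul, map_neg, coeff_C_mul, ih] at hc
    have hnz : ((n : Rc) + 1) ≠ 0 := natCast_ne' n
    apply mul_left_cancel₀ hnz
    rw [show ((n:Rc)+1) * coeff (n+1) E = coeff (n+1) E * ((n:Rc)+1) by ring, hc]
    have hfact : ((n:ℂ)+1) * ((-1:ℂ)^(n+1) / (n+1).factorial) = -((-1:ℂ)^n / n.factorial) := by
      rw [Nat.factorial_succ]
      push_cast
      have h1 : ((n:ℂ)+1) ≠ 0 := by
        intro hx
        exact_mod_cast (Nat.cast_add_one_ne_zero (R := ℂ) n) hx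
      have h2 : (n.factorial : ℂ) ≠ 0 := Nat.cast_ne_zero.mpr n.factorial_ne_zero
      field_simp
      ring
    have hCn : ((n:Rc)+1) = MvPolynomial.C ((n:ℂ)+1) := by
      rw [map_add, map_one, map_natCast]
    rw [hCn]
    conv_rhs => rw [← mul_assoc, ← map_mul, hfact, map_neg]
    rw [pow_succ]
    ring

def vβ (n : ℕ) : Rc := if 2 ∣ n then (MvPolynomial.X 1)^(n/2) else 0

def Dgood (f : PowerSeries Rc) : Prop :=
  ∀ n, coeff n f ∈ Submodule.span ℂ {vβ n}

lemma vβ_mul (a b : ℕ) : vβ a * vβ b = vβ (a+b) ∨ vβ a * vβ b = 0 := by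
  by_cases ha : 2 ∣ a
  · by_cases hb : 2 ∣ b
    · left
      obtain ⟨x, rfl⟩ := ha
      obtain ⟨y, rfl⟩ := hb
      simp only [vβ, if_pos (dvd_mul_right 2 x), if_pos (dvd_mul_right 2 y),
        if_pos (Dvd.dvd.add (dvd_mul_right 2 x) (dvd_mul_right 2 y))]
      rw [Nat.mul_div_cancel_left x (by norm_num), Nat.mul_div_cancel_left y (by norm_num),
        show (2*x+2*y)/2 = x + y by omega, pow_add]
    · right; simp [vβ, hb]
  · right; simp [vβ, ha]

lemma mem_vβ_mul {x y : Rc} {a b : ℕ} (hx : x ∈ Submodule.span ℂ {vβ a})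
    (hy : y ∈ Submodule.span ℂ {vβ b}) : x * y ∈ Submodule.span ℂ {vβ (a+b)} := by
  rw [Submodule.mem_span_singleton] at hx hy ⊢
  obtain ⟨c, rfl⟩ := hx
  obtain ⟨d, rfl⟩ := hy
  rcases vβ_mul a b with h | h
  · exact ⟨c * d, by rw [smul_mul_smul_comm, h]⟩
  · exact ⟨0, by rw [smul_mul_smul_comm, h, smul_zero, zero_smul]⟩

lemma Dgood.mul {f g : PowerSeries Rc} (hf : Dgood f) (hg : Dgood g) : Dgood (f * g) := by
  intro n
  rw [coeff_mul]
  refine Submodule.sum_mem _ fun p hp => ?_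
  have := Finset.HasAntidiagonal.mem_antidiagonal.mp hp
  have h := mem_vβ_mul (hf p.1) (hg p.2)
  rwa [this] at h

lemma Dgood.add {f g : PowerSeries Rc} (hf : Dgood f) (hg : Dgood g) : Dgood (f + g) :=
  fun n => by rw [map_add]; exact Submodule.add_mem _ (hf n) (hg n)

lemma Dgood.C (x : ℂ) : Dgood (PowerSeries.C (R := Rc) (MvPolynomial.C x)) := by
  intro n
  rw [coeff_C]
  split_ifs with h
  · subst h
    rw [Submodule.mem_span_singleton]
    exact ⟨x, by simp [vβ, MvPolynomial.C_eq_smul_one]⟩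
  · exact Submodule.zero_mem _

lemma Dgood.one : Dgood (1 : PowerSeries Rc) := by
  have := Dgood.C 1
  simpa using this

lemma Dgood.pow {f : PowerSeries Rc} (hf : Dgood f) (m : ℕ) : Dgood (f ^ m) := by
  induction m with
  | zero => simpa using Dgood.one
  | succ m ih => rw [pow_succ]; exact ih.mul hf

lemma span_smul_mem {x : Rc} {n : ℕ} (hx : (2:Rc) * x ∈ Submodule.span ℂ {vβ n}) :
    x ∈ Submodule.span ℂ {vβ n} := by
  have h2 : (2:Rc) * x = (2:ℂ) • x := by
    rw [MvPolynomial.smul_eq_C_mul, C2R]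
  have : x = (2⁻¹:ℂ) • ((2:ℂ) • x) := by
    rw [smul_smul]; norm_num
  rw [this, ← h2]
  exact Submodule.smul_mem _ _ hx

lemma hstruct (h : PowerSeries Rc)
    (hh2 : h^2 = 1 + (PowerSeries.C (R := Rc) (MvPolynomial.X 1)) * X^2)
    (hh0 : constantCoeff h = 1) :
    Dgood (h - 1) ∧ constantCoeff (h-1) = 0 ∧ coeff 1 (h-1) = 0
      ∧ 2 * coeff 2 (h-1) = MvPolynomial.X 1 := by
  set g := h - 1 with hg
  have h2g : 2 * g = (PowerSeries.C (R := Rc) (MvPolynomial.X 1)) * X^2 - g * g := by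
    have : h = 1 + g := by rw [hg]; ring
    rw [this] at hh2
    linear_combination hh2
  have hg0 : constantCoeff g = 0 := by
    rw [hg, map_sub, hh0, map_one, sub_self]
  have hcoeffβ : ∀ n, coeff n ((PowerSeries.C (R := Rc) (MvPolynomial.X 1)) * X^2)
      ∈ Submodule.span ℂ {vβ n} := by
    intro n
    rw [coeff_C_mul, coeff_X_pow]
    split_ifs with hn
    · subst hn
      rw [mul_one, Submodule.mem_span_singleton]
      exact ⟨1, by simp [vβ]⟩
    · rw [mul_zero]; exact Submodule.zero_mem _
  have claim : ∀ n, coeff n g ∈ Submodule.span ℂ {vβ n} := by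
    intro n
    induction n using Nat.strong_induction_on with
    | _ n ih =>
      refine span_smul_mem ?_
      have : (2:Rc) * coeff n g = coeff n (2 * g) := by
        have : (2 : PowerSeries Rc) * g = (2:Rc) • g := by
          rw [PowerSeries.smul_eq_C_mul, C2P]
        rw [this, map_smul, smul_eq_mul]
      rw [this, h2g, map_sub]
      refine Submodule.sub_mem _ (hcoeffβ n) ?_
      rw [coeff_mul]
      refine Submodule.sum_mem _ fun p hp => ?_
      have hpn := Finset.HasAntidiagonal.mem_antidiagonal.mp hp
      rcases Nat.eq_zero_or_pos p.1 with h1 | h1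
      · rw [← coeff_zero_eq_constantCoeff] at hg0
        rw [h1, hg0, zero_mul]
        exact Submodule.zero_mem _
      rcases Nat.eq_zero_or_pos p.2 with h2 | h2
      · rw [← coeff_zero_eq_constantCoeff] at hg0
        rw [h2, hg0, mul_zero]
        exact Submodule.zero_mem _
      have := mem_vβ_mul (ih p.1 (by omega)) (ih p.2 (by omega))
      rwa [hpn] at this
  have hg1 : coeff 1 g = 0 := by
    have := claim 1
    simpa [vβ, Submodule.span_zero_singleton] using this
  refine ⟨claim, hg0, hg1, ?_⟩
  have e2 : coeff 2 (2 * g) = coeff 2 ((PowerSeries.C (R := Rc) (MvPolynomial.X 1)) * X^2)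
      - coeff 2 (g * g) := by rw [h2g, map_sub]
  have egg : coeff 2 (g * g) = 0 := by
    rw [coeff_mul, Finset.Nat.sum_antidiagonal_eq_sum_range_succ_mk]
    rw [← coeff_zero_eq_constantCoeff] at hg0
    simp [Finset.sum_range_succ, hg0, hg1]
  have eβ : coeff 2 ((PowerSeries.C (R := Rc) (MvPolynomial.X 1)) * X^2) = MvPolynomial.X 1 := by
    rw [coeff_C_mul, coeff_X_pow]
    simp
  have : coeff 2 (2 * g) = 2 * coeff 2 g := by
    have h2s : (2 : PowerSeries Rc) * g = (2:Rc) • g := by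
      rw [PowerSeries.smul_eq_C_mul, C2P]
    rw [h2s, map_smul, smul_eq_mul]
  rw [this.symm, e2, egg, eβ, sub_zero]


def pr : Rc →+* Rc :=
  (MvPolynomial.aeval (fun i : Fin 2 => if i = 0 then (MvPolynomial.X 0 : Rc) else 0) :
    Rc →ₐ[ℂ] Rc).toRingHom

lemma prC (x : ℂ) : pr (MvPolynomial.C x) = MvPolynomial.C x := by
  simp [pr, MvPolynomial.algebraMap_eq]

lemma prX0 : pr (MvPolynomial.X 0) = MvPolynomial.X 0 := by simp [pr]

lemma prX1 : pr (MvPolynomial.X 1) = 0 := by simp [pr]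

lemma cc_map_pr (f : PowerSeries Rc) :
    constantCoeff (f.map pr) = pr (constantCoeff f) := by
  rw [← coeff_zero_eq_constantCoeff, coeff_map]

end Stmt8Aux
end

/-!
STATEMENT 8: With `ρ_{k,r} ∈ ℂ[ω,β]` defined by the generating function
`Σ_k ρ_{k,r} t^k = (1+βt²)^{−3/4}·((1−t√(−β))/(1+t√(−β)))^{ω/(2√(−β))}
                    ·(√(1−t√(−β))+√(1+t√(−β)))·(1+√(1+βt²))^{(r−1)/2}`
(encoded, as in Statement 7, via the characterizing equations of each factor, the
generating series for the parameter `r` being `G r = A·B·Cc·(D r)`): for every pair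
`(k,r)` with `k ≥ 0` and `r` odd, the polynomials
`ρ_{k,r}, ρ_{k,r+2}, …, ρ_{k,r+2⌊k/2⌋}` are linearly independent over `ℂ`.
Here `ω = X 0`, `β = X 1` in `MvPolynomial (Fin 2) ℂ`.
-/

open PowerSeries

set_option maxHeartbeats 1000000 in
open Stmt8 in
theorem stmt8
    (h A B Cc : PowerSeries (MvPolynomial (Fin 2) ℂ))
    (D G : ℤ → PowerSeries (MvPolynomial (Fin 2) ℂ))
    (hh2 : h ^ 2 = 1 + Pβ * X ^ 2)
    (hh0 : constantCoeff h = 1)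
    (hA0 : constantCoeff A = 1)
    (hA : 2 * (1 + Pβ * X ^ 2) * A.derivativeFun = -3 * (Pβ * X * A))
    (hB0 : constantCoeff B = 1)
    (hB : (1 + Pβ * X ^ 2) * B.derivativeFun = -Pω * B)
    (hC2 : Cc ^ 2 = 2 + 2 * h)
    (hC0 : constantCoeff Cc = 2)
    (hD0 : ∀ r : ℤ, Odd r →
      constantCoeff (D r) = MvPolynomial.C ((2 : ℂ) ^ ((r - 1) / 2)))
    (hD : ∀ r : ℤ, Odd r →
      2 * (h * (1 + h)) * (D r).derivativeFun
        = PowerSeries.C (MvPolynomial.C ((r : ℂ) - 1)) * (Pβ * X * D r))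
    (hG : ∀ r : ℤ, Odd r → G r = A * B * Cc * D r)
    (k : ℕ) (r : ℤ) (hr : Odd r) :
    LinearIndependent ℂ
      (fun j : Fin (k / 2 + 1) =>
        PowerSeries.coeff k (G (r + 2 * (j : ℕ)))) := by
  classical
  rw [Fintype.linearIndependent_iff]
  set M := k / 2 with hM
  intro c hc
  have hβne : (MvPolynomial.X 1 : Stmt8Aux.Rc) ≠ 0 := MvPolynomial.X_ne_zero 1
  have hωne : (MvPolynomial.X 0 : Stmt8Aux.Rc) ≠ 0 := MvPolynomial.X_ne_zero 0
  -- derivative of h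
  have hhd : 2 * (h * h.derivativeFun) = 2 * (Pβ * X) := by
    have e := congrArg derivativeFun hh2
    rw [pow_two, derivativeFun_mul] at e
    simp only [smul_eq_mul] at e
    have e2 : (1 + Pβ * X ^ 2 : PowerSeries Stmt8Aux.Rc).derivativeFun
        = PowerSeries.C (R := Stmt8Aux.Rc) (2 * MvPolynomial.X 1) * X := Stmt8Aux.der_one_add _
    rw [e2, map_mul, Stmt8Aux.C2P] at e
    linear_combination e
  -- step for D
  have hDstep : ∀ s : ℤ, Odd s → D (s + 2) = (1 + h) * D s := by
    intro s hs
    have hs2 : Odd (s + 2) := by rcases hs with ⟨t, rfl⟩; exact ⟨t+1, by ring⟩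
    have e1 := hD (s+2) hs2
    have e2 := hD s hs
    have hc1 : ((((s:ℤ)+2 : ℤ)):ℂ) - 1 = (s:ℂ) + 1 := by push_cast; ring
    rw [hc1] at e1
    have hσ1 : PowerSeries.C (R := Stmt8Aux.Rc) (MvPolynomial.C ((s:ℂ)+1))
        = PowerSeries.C (R := Stmt8Aux.Rc) (MvPolynomial.C ((s:ℂ))) + 1 := by
      rw [map_add, map_one, map_add, map_one]
    have hσ2 : PowerSeries.C (R := Stmt8Aux.Rc) (MvPolynomial.C ((s:ℂ)-1))
        = PowerSeries.C (R := Stmt8Aux.Rc) (MvPolynomial.C ((s:ℂ))) - 1 := by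
      rw [map_sub, map_one, map_sub, map_one]
    rw [hσ1] at e1
    rw [hσ2] at e2
    have hF0 : constantCoeff (D (s+2) - (1 + h) * D s) = 0 := by
      rw [map_sub, map_mul, map_add, hh0, hD0 (s+2) hs2, hD0 s hs, map_one]
      obtain ⟨t, rfl⟩ := hs
      rw [show (2*t+1+2-1)/2 = t+1 by omega, show (2*t+1-1)/2 = t by omega,
        zpow_add_one₀ (two_ne_zero), map_mul, Stmt8Aux.C2R]
      ring
    have hFode : 2 * (h * (1 + h)) * (D (s+2) - (1 + h) * D s).derivativeFun
        = PowerSeries.C (R := Stmt8Aux.Rc) (MvPolynomial.C ((s:ℂ) + 1) * MvPolynomial.X 1)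
          * (X * (D (s+2) - (1 + h) * D s)) := by
      rw [Stmt8Aux.der_sub, derivativeFun_mul, derivativeFun_add, derivativeFun_one]
      simp only [smul_eq_mul]
      rw [zero_add, map_mul, hσ1]
      linear_combination e1 - (1 + h) * e2 - (D s * (1 + h)) * hhd
    have hu0 : constantCoeff (2 * (h * (1+h))) ≠ 0 := by
      rw [map_mul, map_mul, map_add, hh0, map_one, map_ofNat]
      norm_num
    have hzero := Stmt8Aux.ode_zero (2*(h*(1+h))) (D (s+2) - (1 + h) * D s) hu0 _ hF0 hFode
    linear_combination hzero
  -- step for G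
  have hGstep : ∀ j : ℕ, G (r + 2 * (j:ℕ)) = (1 + h)^j * G r := by
    intro j
    induction j with
    | zero => simp [hG r hr]
    | succ j ih =>
      have hodd : Odd (r + 2*(j:ℕ)) := hr.add_even ⟨(j:ℤ), by ring⟩
      have hodd2 : Odd ((r + 2*(j:ℕ)) + 2) := hodd.add_even ⟨1, by ring⟩
      have hcast : (r + 2 * (((j+1) : ℕ) : ℤ)) = (r + 2*(j:ℕ)) + 2 := by push_cast; ring
      rw [hcast, hG _ hodd2, hDstep _ hodd, pow_succ]
      have key : A*B*Cc*D (r+2*(j:ℕ)) = (1+h)^j * G r := (hG _ hodd).symm.trans ih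
      linear_combination (1+h) * key
  -- structure of h
  obtain ⟨hDg_g, hg0, hg1, hg2⟩ := Stmt8Aux.hstruct h hh2 hh0
  have hDg_h : Stmt8Aux.Dgood h := by
    have := hDg_g.add Stmt8Aux.Dgood.one
    rwa [sub_add_cancel] at this
  -- the evaluation β ↦ 0
  have Φone : PowerSeries.map Stmt8Aux.pr (1 + Pβ * X^2) = 1 := by
    rw [map_add, map_one, map_mul, map_pow, PowerSeries.map_C, PowerSeries.map_X,
      Stmt8Aux.prX1, map_zero, zero_mul, add_zero]
  have hmapz : ∀ f : PowerSeries Stmt8Aux.Rc, PowerSeries.map Stmt8Aux.pr (Pβ * X * f) = 0 := by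
    intro f
    rw [map_mul, map_mul, PowerSeries.map_C, Stmt8Aux.prX1, map_zero, zero_mul, zero_mul]
  have Φh : PowerSeries.map Stmt8Aux.pr h = 1 :=
    Stmt8Aux.sqrt_one (by rw [← map_pow, hh2, Φone])
      (by rw [Stmt8Aux.cc_map_pr, hh0, map_one])
  have ΦA : PowerSeries.map Stmt8Aux.pr A = 1 := by
    have e := congrArg (PowerSeries.map Stmt8Aux.pr) hA
    rw [map_mul, map_mul, Φone, map_ofNat, ← Stmt8Aux.map_derivativeFun,
      map_mul, hmapz, mul_zero, mul_one] at e
    have hder : (PowerSeries.map Stmt8Aux.pr A).derivativeFun = 0 := by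
      have h2ne : (2 : PowerSeries Stmt8Aux.Rc) ≠ 0 :=
        Stmt8Aux.ps_ne_zero (by rw [map_ofNat]; norm_num)
      exact (mul_eq_zero.mp e).resolve_left h2ne
    have := Stmt8Aux.eq_C_of_der_zero _ hder
    rw [Stmt8Aux.cc_map_pr, hA0, map_one, map_one] at this
    exact this
  have ΦC : PowerSeries.map Stmt8Aux.pr Cc = 2 := by
    refine Stmt8Aux.sqrt_four ?_
      (by rw [Stmt8Aux.cc_map_pr, hC0, ← Stmt8Aux.C2R, Stmt8Aux.prC, Stmt8Aux.C2R])
    rw [← map_pow, hC2, map_add, map_mul, map_ofNat, Φh, mul_one]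
    norm_num
  have ΦD : PowerSeries.map Stmt8Aux.pr (D r)
      = PowerSeries.C (R := Stmt8Aux.Rc) (MvPolynomial.C ((2:ℂ)^((r-1)/2))) := by
    have e := congrArg (PowerSeries.map Stmt8Aux.pr) (hD r hr)
    rw [map_mul, map_mul, map_mul, map_ofNat, Φh, map_add, map_one, Φh,
      ← Stmt8Aux.map_derivativeFun, map_mul, hmapz, mul_zero] at e
    have hder : (PowerSeries.map Stmt8Aux.pr (D r)).derivativeFun = 0 := by
      have hne : (2 * ((1:PowerSeries Stmt8Aux.Rc) * (1 + 1)) : PowerSeries Stmt8Aux.Rc) ≠ 0 := by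
        refine Stmt8Aux.ps_ne_zero ?_
        rw [map_mul, map_mul, map_add, map_one, map_ofNat]
        norm_num
      exact (mul_eq_zero.mp e).resolve_left hne
    have := Stmt8Aux.eq_C_of_der_zero _ hder
    rw [Stmt8Aux.cc_map_pr, hD0 r hr, Stmt8Aux.prC] at this
    exact this
  have ΦB : ∀ m : ℕ, coeff m (PowerSeries.map Stmt8Aux.pr B)
      = MvPolynomial.C (((-1:ℂ)^m : ℂ) / m.factorial) * (MvPolynomial.X 0)^m := by
    have e := congrArg (PowerSeries.map Stmt8Aux.pr) hB
    rw [map_mul, Φone, one_mul, ← Stmt8Aux.map_derivativeFun, map_mul, map_neg,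
      PowerSeries.map_C, Stmt8Aux.prX0] at e
    exact Stmt8Aux.expB (by rw [Stmt8Aux.cc_map_pr, hB0, map_one]) (by rw [e])
  -- coefficient formula
  set κ : ℕ → ℂ := fun m => (2:ℂ)^((r-1)/2) * 2 * ((-1:ℂ)^m / m.factorial) with hκdef
  have κne : ∀ m, κ m ≠ 0 := by
    intro m
    simp only [hκdef]
    refine mul_ne_zero (mul_ne_zero (zpow_ne_zero _ two_ne_zero) two_ne_zero) ?_
    exact div_ne_zero (pow_ne_zero _ (by norm_num)) (Nat.cast_ne_zero.mpr m.factorial_ne_zero)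
  have ΦG : ∀ m : ℕ, Stmt8Aux.pr (coeff m (G r))
      = MvPolynomial.C (κ m) * (MvPolynomial.X 0)^m := by
    have hGmap : PowerSeries.map Stmt8Aux.pr (G r)
        = PowerSeries.C (R := Stmt8Aux.Rc) (MvPolynomial.C ((2:ℂ)^((r-1)/2) * 2))
          * PowerSeries.map Stmt8Aux.pr B := by
      rw [hG r hr, map_mul, map_mul, map_mul, ΦA, ΦC, ΦD, one_mul]
      rw [map_mul, Stmt8Aux.C2R, map_mul, Stmt8Aux.C2P]
      ring
    intro m
    rw [← coeff_map, hGmap, coeff_C_mul, ΦB, ← mul_assoc, ← map_mul]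
  -- Q and its coefficients
  set Q : PowerSeries Stmt8Aux.Rc := ∑ j : Fin (M+1),
    PowerSeries.C (R := Stmt8Aux.Rc) (MvPolynomial.C (c j)) * (1+h)^(j:ℕ) with hQdef
  have hQk : coeff k (Q * G r) = 0 := by
    rw [hQdef, Finset.sum_mul, map_sum, ← hc]
    refine Finset.sum_congr rfl fun j _ => ?_
    rw [hGstep (j:ℕ), mul_assoc, coeff_C_mul, MvPolynomial.smul_eq_C_mul]
  have hDgQ : Stmt8Aux.Dgood Q := by
    intro n
    rw [hQdef, map_sum]
    exact Submodule.sum_mem _ fun j _ =>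
      (Stmt8Aux.Dgood.C (c j)).mul ((Stmt8Aux.Dgood.one.add hDg_h).pow (j:ℕ)) n
  choose d hd using fun n => Submodule.mem_span_singleton.mp (hDgQ n)
  have hQodd : ∀ n, ¬ (2 ∣ n) → coeff n Q = 0 := fun n hn => by
    rw [← hd n, Stmt8Aux.vβ, if_neg hn, smul_zero]
  -- extract vanishing of even coefficients of Q up to k
  have claim1 : ∀ i, 2*i ≤ k → coeff (2*i) Q = 0 := by
    intro i
    induction i using Nat.strong_induction_on with
    | _ i ih =>
    intro hik
    set T : Stmt8Aux.Rc := ∑ p ∈ Finset.HasAntidiagonal.antidiagonal k, (if 2 ∣ p.1 ∧ 2*i ≤ p.1 then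
        (MvPolynomial.C (d p.1)) * (MvPolynomial.X 1)^(p.1/2 - i) * coeff p.2 (G r)
        else 0) with hTdef
    have hfac : coeff k (Q * G r) = (MvPolynomial.X 1)^i * T := by
      rw [coeff_mul, hTdef, Finset.mul_sum]
      refine Finset.sum_congr rfl fun p hp => ?_
      have hpk := Finset.HasAntidiagonal.mem_antidiagonal.mp hp
      by_cases h1 : 2 ∣ p.1
      · by_cases h2 : 2*i ≤ p.1
        · rw [if_pos ⟨h1, h2⟩, ← hd p.1, Stmt8Aux.vβ, if_pos h1,
            MvPolynomial.smul_eq_C_mul]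
          have e : (MvPolynomial.X 1 : Stmt8Aux.Rc)^(p.1/2) = (MvPolynomial.X 1)^i
              * (MvPolynomial.X 1)^(p.1/2 - i) := by
            rw [← pow_add]
            congr 1
            omega
          rw [e]; ring
        · obtain ⟨i', hi'⟩ := h1
          rw [if_neg (by tauto)]
          have hz : coeff p.1 Q = 0 := by
            rw [hi']; exact ih i' (by omega) (by omega)
          rw [hz, zero_mul, mul_zero]
      · rw [if_neg (by tauto), hQodd p.1 h1, zero_mul, mul_zero]
    have hT0 : T = 0 := by
      have hx := hQk
      rw [hfac] at hx
      exact (mul_eq_zero.mp hx).resolve_left (pow_ne_zero _ hβne)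
    have hπT := congrArg Stmt8Aux.pr hT0
    rw [hTdef, map_sum, map_zero] at hπT
    rw [Finset.sum_eq_single_of_mem (2*i, k - 2*i)
      (Finset.HasAntidiagonal.mem_antidiagonal.mpr (by omega)) ?side] at hπT
    case side =>
      intro p hp hne
      by_cases h1 : 2 ∣ p.1 ∧ 2*i ≤ p.1
      · rw [if_pos h1]
        have hp1 : p.1 ≠ 2*i := by
          intro hq
          apply hne
          have hpk := Finset.HasAntidiagonal.mem_antidiagonal.mp hp
          exact Prod.ext hq (by omega)
        obtain ⟨⟨i', hi'⟩, h2⟩ := h1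
        rw [map_mul, map_mul, map_pow, Stmt8Aux.prX1, zero_pow (by omega), mul_zero, zero_mul]
      · rw [if_neg h1, map_zero]
    rw [if_pos ⟨⟨i, rfl⟩, le_refl _⟩, map_mul, map_mul, Stmt8Aux.prC, map_pow, Stmt8Aux.prX1,
      show (2*i)/2 - i = 0 by omega, pow_zero, mul_one, ΦG (k - 2*i),
      ← mul_assoc, ← map_mul] at hπT
    have hd0 : d (2*i) * κ (k - 2*i) = 0 := by
      have := (mul_eq_zero.mp hπT).resolve_right (pow_ne_zero _ hωne)
      exact (MvPolynomial.C_eq_zero).mp this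
    have : d (2*i) = 0 := (mul_eq_zero.mp hd0).resolve_right (κne _)
    rw [← hd (2*i), this, zero_smul]
  have coeffQ : ∀ n, n ≤ k → coeff n Q = 0 := by
    intro n hn
    by_cases h2 : 2 ∣ n
    · obtain ⟨t, rfl⟩ := h2
      exact claim1 t hn
    · exact hQodd n h2
  -- g = h - 1 = X^2 * w
  have hX2dvd : (X : PowerSeries Stmt8Aux.Rc)^2 ∣ (h - 1) := by
    rw [PowerSeries.X_pow_dvd_iff]
    intro m hm
    match m, hm with
    | 0, _ => rw [coeff_zero_eq_constantCoeff]; exact hg0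
    | 1, _ => exact hg1
  obtain ⟨w, hw⟩ := hX2dvd
  have hcw : 2 * constantCoeff w = MvPolynomial.X 1 := by
    have e : coeff 2 ((X:PowerSeries Stmt8Aux.Rc)^2 * w)
        = constantCoeff w := by
      have e2 := coeff_X_pow_mul w 2 0
      simpa using e2
    rw [← e, ← hw]
    exact hg2
  have hwne : constantCoeff w ≠ 0 := by
    intro hx
    rw [hx, mul_zero] at hcw
    exact hβne hcw.symm
  -- expansion of Q in powers of (h-1)
  set q : ℕ → ℂ := fun s => ∑ j : Fin (M+1),
    c j * (((j:ℕ).choose s : ℕ) : ℂ) * 2^((j:ℕ)-s) with hqdef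
  have hQexp : Q = ∑ s ∈ Finset.range (M+1),
      PowerSeries.C (R := Stmt8Aux.Rc) (MvPolynomial.C (q s)) * (h-1)^s := by
    rw [hQdef]
    have hj : ∀ j : Fin (M+1), ((1:PowerSeries Stmt8Aux.Rc) + h)^(j:ℕ)
        = ∑ s ∈ Finset.range (M+1),
          ((((j:ℕ).choose s : ℕ) : PowerSeries Stmt8Aux.Rc) * 2^((j:ℕ)-s)) * (h-1)^s := by
      intro j
      rw [show (1 + h : PowerSeries Stmt8Aux.Rc) = (h - 1) + 2 by ring, add_pow]
      rw [Finset.sum_subset (Finset.range_subset_range.mpr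
        (Nat.succ_le_succ (Nat.lt_succ_iff.mp j.isLt)))]
      · exact Finset.sum_congr rfl fun s _ => by ring
      · intro s hs hns
        rw [Nat.choose_eq_zero_of_lt (by simp at hns ⊢; omega)]
        simp
    calc ∑ j : Fin (M+1), PowerSeries.C (R := Stmt8Aux.Rc) (MvPolynomial.C (c j)) * (1+h)^(j:ℕ)
        = ∑ j : Fin (M+1), ∑ s ∈ Finset.range (M+1),
            PowerSeries.C (R := Stmt8Aux.Rc) (MvPolynomial.C (c j))
            * (((((j:ℕ).choose s : ℕ) : PowerSeries Stmt8Aux.Rc) * 2^((j:ℕ)-s)) * (h-1)^s) := by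
          refine Finset.sum_congr rfl fun j _ => ?_
          rw [hj j, Finset.mul_sum]
      _ = ∑ s ∈ Finset.range (M+1), ∑ j : Fin (M+1),
            PowerSeries.C (R := Stmt8Aux.Rc) (MvPolynomial.C (c j))
            * (((((j:ℕ).choose s : ℕ) : PowerSeries Stmt8Aux.Rc) * 2^((j:ℕ)-s)) * (h-1)^s) :=
          Finset.sum_comm
      _ = ∑ s ∈ Finset.range (M+1),
            PowerSeries.C (R := Stmt8Aux.Rc) (MvPolynomial.C (q s)) * (h-1)^s := by
          refine Finset.sum_congr rfl fun s _ => ?_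
          simp only [hqdef]
          rw [map_sum, map_sum, Finset.sum_mul]
          refine Finset.sum_congr rfl fun j _ => ?_
          have e1 : ((((j:ℕ).choose s : ℕ)) : PowerSeries Stmt8Aux.Rc)
              = PowerSeries.C (R := Stmt8Aux.Rc) (MvPolynomial.C ((((j:ℕ).choose s : ℕ)) : ℂ)) := by
            rw [map_natCast, map_natCast]
          have e2 : ((2:PowerSeries Stmt8Aux.Rc))^((j:ℕ)-s)
              = PowerSeries.C (R := Stmt8Aux.Rc) (MvPolynomial.C ((2:ℂ)^((j:ℕ)-s))) := by
            rw [map_pow, map_pow, Stmt8Aux.C2R, Stmt8Aux.C2P]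
          rw [e1, e2, map_mul, map_mul, map_mul, map_mul]
          ring
  -- conclude q s = 0
  have claim2 : ∀ s, s ≤ M → q s = 0 := by
    intro s
    induction s using Nat.strong_induction_on with
    | _ s ih =>
    intro hsM
    have e0 := coeffQ (2*s) (by omega)
    rw [hQexp, map_sum] at e0
    rw [Finset.sum_eq_single_of_mem s (Finset.mem_range.mpr (by omega)) ?side2] at e0
    case side2 =>
      intro s' hs' hne
      rcases Nat.lt_or_ge s' s with hlt | hge
      · rw [ih s' hlt (by simp at hs'; omega)]
        simp
      · have hgt : s < s' := by omega
        rw [coeff_C_mul, hw, mul_pow, ← pow_mul, coeff_X_pow_mul', if_neg (by omega), mul_zero]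
    rw [coeff_C_mul, hw, mul_pow, ← pow_mul, coeff_X_pow_mul', if_pos (le_refl _),
      Nat.sub_self, coeff_zero_eq_constantCoeff, map_pow] at e0
    rcases mul_eq_zero.mp e0 with hz | hz
    · exact (MvPolynomial.C_eq_zero).mp hz
    · exact absurd hz (pow_ne_zero _ hwne)
  -- conclude c = 0 by downward induction
  have key : ∀ j : Fin (M+1), (∀ j' : Fin (M+1), (j:ℕ) < (j':ℕ) → c j' = 0) → c j = 0 := by
    intro j hj'
    have hq0 := claim2 (j:ℕ) (Nat.lt_succ_iff.mp j.isLt)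
    simp only [hqdef] at hq0
    rw [Finset.sum_eq_single_of_mem j (Finset.mem_univ j) ?side3] at hq0
    case side3 =>
      intro j' _ hne
      rcases Nat.lt_or_ge (j':ℕ) (j:ℕ) with hlt | hge
      · rw [Nat.choose_eq_zero_of_lt hlt]
        simp
      · have hlt2 : (j:ℕ) < (j':ℕ) := by
          rcases Nat.eq_or_lt_of_le hge with he | hlt
          · exact absurd (Fin.ext he.symm) hne
          · exact hlt
        rw [hj' j' hlt2]
        simp
    simpa using hq0
  have down : ∀ t, ∀ j : Fin (M+1), M - (j:ℕ) ≤ t → c j = 0 := by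
    intro t
    induction t with
    | zero =>
      intro j hj
      exact key j fun j' h' => False.elim (by have := j'.isLt; omega)
    | succ t ih =>
      intro j hj
      exact key j fun j' h' => ih j' (by omega)
  intro i
  exact down M i (by omega)
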